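/- A complex symmetric unitary matrix H (H^T = H and H*H = I) has an orthonormal basis of real eigenvectors. -/

import Mathlib

set_option maxHeartbeats 2000000

open Matrix Module.End

/-- A complex symmetric unitary matrix has an orthonormal basis of real
eigenvectors. -/
theorem symm_unitary_real_eigenbasis {n : ℕ}
    (H : Matrix (Fin n) (Fin n) ℂ) (hsymm : H.IsSymm)
    (hunit : H.conjTranspose * H = 1) :
    ∃ v : Fin n → (Fin n → ℝ),
      (∀ i j : Fin n, (v i) ⬝ᵥ (v j) = if i = j then 1 else 0) ∧
      (∀ i : Fin n, ∃ μ : ℂ,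
        H.mulVec (fun k => ((v i k : ℝ) : ℂ)) = μ • (fun k => ((v i k : ℝ) : ℂ))) := by
  classical
  set A : Matrix (Fin n) (Fin n) ℝ := fun i j => (H i j).re with hA
  set B : Matrix (Fin n) (Fin n) ℝ := fun i j => (H i j).im with hB
  have hHsym : ∀ i j, H i j = H j i := fun i j => by
    conv_lhs => rw [← hsymm]
    rfl
  have hAH : A.IsHermitian := by
    ext i j
    simp only [conjTranspose_apply, A, star_trivial]
    rw [hHsym i j]
    rfl
  have hBH : B.IsHermitian := by
    ext i j
    simp only [conjTranspose_apply, B, star_trivial]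
    rw [hHsym i j]
    rfl
  have hcommM : A * B = B * A := by
    ext i j
    have h2 : ((H.conjTranspose * H) i j).im = 0 := by
      rw [hunit]
      simp [Matrix.one_apply, apply_ite Complex.im]
    simp only [Matrix.mul_apply, conjTranspose_apply, Complex.im_sum] at h2 ⊢
    have key : ∀ k, ((star (H k i)) * H k j).im = A i k * B k j - B i k * A k j := by
      intro k
      show ((starRingEnd ℂ) (H k i) * H k j).im
          = (H i k).re * (H k j).im - (H i k).im * (H k j).re
      rw [hHsym i k, Complex.mul_im, Complex.conj_re, Complex.conj_im]
      ring
    simp only [key, Finset.sum_sub_distrib] at h2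
    linarith [h2]
  have hAs : (Matrix.toEuclideanLin A).IsSymmetric := isHermitian_iff_isSymmetric.mp hAH
  have hBs : (Matrix.toEuclideanLin B).IsSymmetric := isHermitian_iff_isSymmetric.mp hBH
  have hcomm : Commute (Matrix.toEuclideanLin A) (Matrix.toEuclideanLin B) := by
    show _ = _
    ext v j
    show ((Matrix.toEuclideanLin A) ((Matrix.toEuclideanLin B) v)) j
      = ((Matrix.toEuclideanLin B) ((Matrix.toEuclideanLin A) v)) j
    simp only [Matrix.toEuclideanLin_apply]
    show (A *ᵥ (B *ᵥ _)) j = (B *ᵥ (A *ᵥ _)) j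
    rw [Matrix.mulVec_mulVec, Matrix.mulVec_mulVec, hcommM]
  have hint := LinearMap.IsSymmetric.directSum_isInternal_of_commute hAs hBs hcomm
  have hfam := LinearMap.IsSymmetric.orthogonalFamily_eigenspace_inf_eigenspace hAs hBs
  set V : ℝ × ℝ → Submodule ℝ (EuclideanSpace ℝ (Fin n)) :=
    fun p => eigenspace (Matrix.toEuclideanLin A) p.2 ⊓ eigenspace (Matrix.toEuclideanLin B) p.1
    with hVdef
  haveI : Fintype {p : ℝ × ℝ // V p ≠ ⊥} :=
    hint.submodule_iSupIndep.fintypeNeBotOfFiniteDimensional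
  have hint' : DirectSum.IsInternal (fun p : {p : ℝ × ℝ // V p ≠ ⊥} => V p.1) := by
    rw [DirectSum.isInternal_submodule_iff_iSupIndep_and_iSup_eq_top]
    refine ⟨hint.submodule_iSupIndep.comp Subtype.val_injective, ?_⟩
    rw [iSup_ne_bot_subtype]
    exact hint.submodule_iSup_eq_top
  have hfam' : OrthogonalFamily ℝ (fun p : {p : ℝ × ℝ // V p ≠ ⊥} => V p.1)
      (fun p => (V p.1).subtypeₗᵢ) := hfam.comp Subtype.val_injective
  let b := hint'.subordinateOrthonormalBasis finrank_euclideanSpace_fin hfam'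
  refine ⟨fun i k => b i k, ?_, ?_⟩
  · intro i j
    have := orthonormal_iff_ite.mp b.orthonormal i j
    simpa [dotProduct, PiLp.inner_apply, mul_comm] using this
  · intro i
    have hmem := hint'.subordinateOrthonormalBasis_subordinate finrank_euclideanSpace_fin i hfam'
    set q := hint'.subordinateOrthonormalBasisIndex finrank_euclideanSpace_fin i hfam' with hq
    set p : ℝ × ℝ := q.1 with hp
    obtain ⟨h1, h2⟩ := hmem
    simp only [SetLike.mem_coe, Module.End.mem_eigenspace_iff] at h1 h2
    refine ⟨(p.2 : ℂ) + (p.1 : ℂ) * Complex.I, ?_⟩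
    have hAe : ∀ j, A.mulVec (fun k => b i k) j = p.2 * b i j := fun j => congrArg (fun x : EuclideanSpace ℝ (Fin n) => x j) h1
    have hBe : ∀ j, B.mulVec (fun k => b i k) j = p.1 * b i j := fun j => congrArg (fun x : EuclideanSpace ℝ (Fin n) => x j) h2
    funext j
    have hAe' := hAe j
    have hBe' := hBe j
    simp only [Matrix.mulVec, dotProduct] at hAe' hBe'
    show ∑ k, H j k * (b i k : ℂ) = _
    have hent : ∀ k, H j k = (A j k : ℂ) + (B j k : ℂ) * Complex.I := by
      intro k
      show H j k = ((H j k).re : ℂ) + ((H j k).im : ℂ) * Complex.I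
      exact (Complex.re_add_im _).symm
    calc ∑ k, H j k * (b i k : ℂ)
        = ∑ k, ((((A j k * b i k : ℝ)) : ℂ) + (((B j k * b i k : ℝ)) : ℂ) * Complex.I) := by
          refine Finset.sum_congr rfl fun k _ => by rw [hent k]; push_cast; ring
      _ = ((∑ k, A j k * b i k : ℝ) : ℂ) + ((∑ k, B j k * b i k : ℝ) : ℂ) * Complex.I := by
          push_cast; rw [Finset.sum_add_distrib, ← Finset.sum_mul]
      _ = ((p.2 * b i j : ℝ) : ℂ) + ((p.1 * b i j : ℝ) : ℂ) * Complex.I := by rw [hAe', hBe']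
      _ = ((p.2 : ℂ) + (p.1 : ℂ) * Complex.I) * (b i j : ℂ) := by push_cast; ring
      _ = (((p.2 : ℂ) + (p.1 : ℂ) * Complex.I) • fun k => ((b i k : ℝ) : ℂ)) j := rfl
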